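/- Let (Ω, 𝓕, P) be a probability space, d ≥ 1 and ε > 0, and let X : Ω → ℝ^d be a random vector with E[‖X‖^{2+ε}] < ∞; set K := ( E[‖X‖^{2+ε}] )^{2/(2+ε)}. Let A₀, A₁, …, A_L be measurable sets partitioning Ω with P(A_ℓ) > 0 for every ℓ = 0, 1, …, L, and suppose there is D ≥ 0 such that for each ℓ ∈ {1, …, L}, ‖X(ω) − X(ω′)‖ ≤ D for almost every pair ω, ω′ ∈ A_ℓ. Then for every v ∈ ℝ^d, Σ_{ℓ=1}^{L} E[ ⟨v, X − E[X | A_ℓ]⟩² · 1_{A_ℓ} ] + E[ ⟨v, X − E[X | A₀]⟩² · 1_{A₀} ] ≤ ( D² + K · P(A₀)^{ε/(2+ε)} ) · ‖v‖², where E[X | A] denotes the conditional expectation vector E[X · 1_A]/P(A) and ⟨·,·⟩ the Euclidean inner product. -/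

import Mathlib

open MeasureTheory
open scoped RealInnerProductSpace ENNReal NNReal

/-- The mean minimizes the mean square deviation. -/
lemma ccb_sq_integral_mean_le {α : Type*} [MeasurableSpace α] (μ : Measure α)
    [IsFiniteMeasure μ] (f : α → ℝ) (hf : Integrable f μ)
    (hf2 : Integrable (fun x => f x ^ 2) μ) (a c : ℝ)
    (ha : a * (μ Set.univ).toReal = ∫ x, f x ∂μ) :
    ∫ x, (f x - a) ^ 2 ∂μ ≤ ∫ x, (f x - c) ^ 2 ∂μ := by
  have h1 : Integrable (fun x => (f x - a) ^ 2) μ := by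
    have : (fun x => (f x - a) ^ 2) = fun x => f x ^ 2 - 2 * a * f x + a ^ 2 :=
      funext fun x => by ring
    rw [this]
    exact (hf2.sub (hf.const_mul _)).add (integrable_const _)
  have h2 : Integrable (fun x => 2 * (a - c) * (f x - a)) μ :=
    (hf.sub (integrable_const a)).const_mul _
  have hsub : ∫ x, (f x - a) ∂μ = 0 := by
    rw [integral_sub hf (integrable_const a), integral_const, smul_eq_mul, measureReal_def]
    linarith [ha]
  have key : ∫ x, (f x - c) ^ 2 ∂μ
      = ∫ x, (f x - a) ^ 2 ∂μ + (a - c) ^ 2 * (μ Set.univ).toReal := by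
    have : (fun x => (f x - c) ^ 2)
        = fun x => (f x - a) ^ 2 + 2 * (a - c) * (f x - a) + (a - c) ^ 2 :=
      funext fun x => by ring
    have h12 : Integrable (fun x => (f x - a) ^ 2 + 2 * (a - c) * (f x - a)) μ := h1.add h2
    rw [this, integral_add h12 (integrable_const _), integral_add h1 h2,
      integral_const_mul, hsub, integral_const, smul_eq_mul, measureReal_def]
    ring
  nlinarith [mul_nonneg (sq_nonneg (a - c)) (ENNReal.toReal_nonneg (a := μ Set.univ))]

theorem conditional_covariance_bound {Ω : Type*} [MeasureSpace Ω]
    (hP : IsProbabilityMeasure (volume : Measure Ω))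
    (d : ℕ) (hd : 1 ≤ d) (ε : ℝ) (hε : 0 < ε)
    (X : Ω → EuclideanSpace ℝ (Fin d)) (hX : Measurable X)
    (hmom : Integrable fun ω => ‖X ω‖ ^ (2 + ε))
    (K : ℝ) (hK : K = (∫ ω, ‖X ω‖ ^ (2 + ε)) ^ (2 / (2 + ε)))
    (L : ℕ) (A : ℕ → Set Ω)
    (hmeas : ∀ ℓ ≤ L, MeasurableSet (A ℓ))
    (hApos : ∀ ℓ ≤ L, 0 < volume (A ℓ))
    (hdisj : ∀ ℓ ≤ L, ∀ ℓ' ≤ L, ℓ ≠ ℓ' → Disjoint (A ℓ) (A ℓ'))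
    (hcover : (⋃ ℓ ∈ Finset.range (L + 1), A ℓ) = Set.univ)
    (D : ℝ) (hD : 0 ≤ D)
    (hdiam : ∀ ℓ, 1 ≤ ℓ → ℓ ≤ L →
      ∀ᵐ q : Ω × Ω ∂((volume : Measure Ω).prod volume),
        q.1 ∈ A ℓ → q.2 ∈ A ℓ → ‖X q.1 - X q.2‖ ≤ D)
    (mA : ℕ → EuclideanSpace ℝ (Fin d))
    (hmA : ∀ ℓ ≤ L, mA ℓ = ((volume (A ℓ)).toReal)⁻¹ • ∫ ω in A ℓ, X ω) :
    ∀ v : EuclideanSpace ℝ (Fin d),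
      (∑ ℓ ∈ Finset.Icc 1 L, ∫ ω in A ℓ, ⟪v, X ω - mA ℓ⟫ ^ 2) +
        (∫ ω in A 0, ⟪v, X ω - mA 0⟫ ^ 2) ≤
      (D ^ 2 + K * ((volume (A 0)).toReal) ^ (ε / (2 + ε))) * ‖v‖ ^ 2 := by
  intro v
  have h2ε : (0:ℝ) < 2 + ε := by linarith
  have hfin : ∀ ℓ, volume (A ℓ) ≠ ⊤ := fun ℓ => measure_ne_top _ _
  have hXsm : AEStronglyMeasurable X (volume : Measure Ω) := hX.aestronglyMeasurable
  -- pointwise bounds against the (2+ε)-moment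
  have hb1 : ∀ ω : Ω, ‖X ω‖ ≤ 1 + ‖X ω‖ ^ (2 + ε) := by
    intro ω
    rcases le_or_gt (‖X ω‖) 1 with h | h
    · have : (0:ℝ) ≤ ‖X ω‖ ^ (2 + ε) := Real.rpow_nonneg (norm_nonneg _) _
      linarith
    · have h2 : ‖X ω‖ ^ (1:ℝ) ≤ ‖X ω‖ ^ (2 + ε) :=
        Real.rpow_le_rpow_of_exponent_le h.le (by linarith)
      rw [Real.rpow_one] at h2; linarith
  have hb2 : ∀ ω : Ω, ‖X ω‖ ^ (2:ℝ) ≤ 1 + ‖X ω‖ ^ (2 + ε) := by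
    intro ω
    rcases le_or_gt (‖X ω‖) 1 with h | h
    · have h0 : ‖X ω‖ ^ (2:ℝ) ≤ 1 ^ (2:ℝ) :=
        Real.rpow_le_rpow (norm_nonneg _) h (by norm_num)
      have : (0:ℝ) ≤ ‖X ω‖ ^ (2 + ε) := Real.rpow_nonneg (norm_nonneg _) _
      rw [Real.one_rpow] at h0; linarith
    · have h2 : ‖X ω‖ ^ (2:ℝ) ≤ ‖X ω‖ ^ (2 + ε) :=
        Real.rpow_le_rpow_of_exponent_le h.le (by linarith)
      have : (0:ℝ) ≤ ‖X ω‖ ^ (2 + ε) := Real.rpow_nonneg (norm_nonneg _) _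
      linarith
  have hmom1 : Integrable (fun ω => 1 + ‖X ω‖ ^ (2 + ε)) (volume : Measure Ω) :=
    (integrable_const _).add hmom
  have hXint : Integrable X (volume : Measure Ω) := by
    refine hmom1.mono' hXsm ?_
    filter_upwards with ω
    exact hb1 ω
  have hX2int : Integrable (fun ω => ‖X ω‖ ^ (2:ℝ)) (volume : Measure Ω) := by
    refine hmom1.mono' ((hX.norm.pow_const _).aestronglyMeasurable) ?_
    filter_upwards with ω
    rw [Real.norm_eq_abs, abs_of_nonneg (Real.rpow_nonneg (norm_nonneg _) _)]
    exact hb2 ω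
  -- block bound for ℓ ∈ [1, L]
  have hblock : ∀ ℓ ∈ Finset.Icc 1 L,
      ∫ ω in A ℓ, ⟪v, X ω - mA ℓ⟫ ^ 2 ≤ D ^ 2 * ‖v‖ ^ 2 * (volume (A ℓ)).toReal := by
    intro ℓ hℓ
    obtain ⟨h1ℓ, hℓL⟩ := Finset.mem_Icc.mp hℓ
    have hml : MeasurableSet (A ℓ) := hmeas ℓ hℓL
    have hae := Measure.ae_ae_of_ae_prod (hdiam ℓ h1ℓ hℓL)
    have hfreq : ∃ᵐ ω ∂(volume : Measure Ω), ω ∈ A ℓ :=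
      frequently_ae_mem_iff.mpr (hApos ℓ hℓL).ne'
    obtain ⟨ω₀, hω₀A, hω₀⟩ := (hfreq.and_eventually hae).exists
    have hbd : ∀ᵐ ω' ∂(volume.restrict (A ℓ)), ‖X ω₀ - X ω'‖ ≤ D := by
      filter_upwards [ae_restrict_of_ae hω₀, ae_restrict_mem hml] with ω' h hm
      exact h hω₀A hm
    have hXintℓ : Integrable X (volume.restrict (A ℓ)) := by
      refine (integrable_const (‖X ω₀‖ + D)).mono' hXsm.restrict ?_
      filter_upwards [hbd] with ω' h
      calc ‖X ω'‖ = ‖X ω₀ - (X ω₀ - X ω')‖ := by rw [sub_sub_cancel]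
        _ ≤ ‖X ω₀‖ + ‖X ω₀ - X ω'‖ := norm_sub_le _ _
        _ ≤ ‖X ω₀‖ + D := by linarith
    have hfintℓ : Integrable (fun ω => ⟪v, X ω⟫) (volume.restrict (A ℓ)) :=
      hXintℓ.const_inner v
    have hf2intℓ : Integrable (fun ω => ⟪v, X ω⟫ ^ 2) (volume.restrict (A ℓ)) := by
      refine (integrable_const ((‖v‖ * (‖X ω₀‖ + D)) ^ 2)).mono'
        (((measurable_const.inner hX).pow_const 2).aestronglyMeasurable.restrict) ?_
      filter_upwards [hbd] with ω' h
      have h1 : |⟪v, X ω'⟫| ≤ ‖v‖ * ‖X ω'‖ := abs_real_inner_le_norm _ _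
      have hX' : ‖X ω'‖ ≤ ‖X ω₀‖ + D :=
        calc ‖X ω'‖ = ‖X ω₀ - (X ω₀ - X ω')‖ := by rw [sub_sub_cancel]
          _ ≤ ‖X ω₀‖ + ‖X ω₀ - X ω'‖ := norm_sub_le _ _
          _ ≤ ‖X ω₀‖ + D := by linarith
      rw [Real.norm_eq_abs, abs_of_nonneg (sq_nonneg _), ← sq_abs]
      have hle : |⟪v, X ω'⟫| ≤ ‖v‖ * (‖X ω₀‖ + D) :=
        h1.trans (mul_le_mul_of_nonneg_left hX' (norm_nonneg v))
      exact pow_le_pow_left₀ (abs_nonneg _) hle 2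
    have hM : ((volume.restrict (A ℓ)) Set.univ).toReal = (volume (A ℓ)).toReal := by
      rw [Measure.restrict_apply_univ]
    have hMpos : 0 < (volume (A ℓ)).toReal := ENNReal.toReal_pos (hApos ℓ hℓL).ne' (hfin ℓ)
    have hmean : ⟪v, mA ℓ⟫ * ((volume.restrict (A ℓ)) Set.univ).toReal
        = ∫ ω, ⟪v, X ω⟫ ∂(volume.restrict (A ℓ)) := by
      rw [hM, hmA ℓ hℓL, real_inner_smul_right, integral_inner hXintℓ v]
      field_simp
    have step1 := ccb_sq_integral_mean_le (volume.restrict (A ℓ)) _ hfintℓ hf2intℓ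
      (⟪v, mA ℓ⟫) (⟪v, X ω₀⟫) hmean
    have hintc : Integrable (fun ω => (⟪v, X ω⟫ - ⟪v, X ω₀⟫) ^ 2) (volume.restrict (A ℓ)) := by
      have : (fun ω => (⟪v, X ω⟫ - ⟪v, X ω₀⟫) ^ 2)
          = fun ω => ⟪v, X ω⟫ ^ 2 - 2 * ⟪v, X ω₀⟫ * ⟪v, X ω⟫ + ⟪v, X ω₀⟫ ^ 2 :=
        funext fun ω => by ring
      rw [this]
      exact (hf2intℓ.sub (hfintℓ.const_mul _)).add (integrable_const _)
    have step2 : ∫ ω, (⟪v, X ω⟫ - ⟪v, X ω₀⟫) ^ 2 ∂(volume.restrict (A ℓ))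
        ≤ D ^ 2 * ‖v‖ ^ 2 * (volume (A ℓ)).toReal := by
      have hb : ∀ᵐ ω ∂(volume.restrict (A ℓ)),
          (⟪v, X ω⟫ - ⟪v, X ω₀⟫) ^ 2 ≤ D ^ 2 * ‖v‖ ^ 2 := by
        filter_upwards [hbd] with ω h
        have h1 : ⟪v, X ω⟫ - ⟪v, X ω₀⟫ = ⟪v, X ω - X ω₀⟫ := (inner_sub_right _ _ _).symm
        have h2 : |⟪v, X ω - X ω₀⟫| ≤ ‖v‖ * ‖X ω - X ω₀‖ := abs_real_inner_le_norm _ _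
        have h3 : ‖X ω - X ω₀‖ ≤ D := by rw [norm_sub_rev]; exact h
        rw [h1, ← sq_abs]
        have hle : |⟪v, X ω - X ω₀⟫| ≤ ‖v‖ * D :=
          h2.trans (mul_le_mul_of_nonneg_left h3 (norm_nonneg v))
        calc |⟪v, X ω - X ω₀⟫| ^ 2 ≤ (‖v‖ * D) ^ 2 := pow_le_pow_left₀ (abs_nonneg _) hle 2
          _ = D ^ 2 * ‖v‖ ^ 2 := by ring
      calc ∫ ω, (⟪v, X ω⟫ - ⟪v, X ω₀⟫) ^ 2 ∂(volume.restrict (A ℓ))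
          ≤ ∫ _ω, D ^ 2 * ‖v‖ ^ 2 ∂(volume.restrict (A ℓ)) :=
            integral_mono_ae hintc (integrable_const _) hb
        _ = D ^ 2 * ‖v‖ ^ 2 * (volume (A ℓ)).toReal := by
            rw [integral_const, measureReal_restrict_apply_univ, measureReal_def, smul_eq_mul]; ring
    calc ∫ ω in A ℓ, ⟪v, X ω - mA ℓ⟫ ^ 2
        = ∫ ω, (⟪v, X ω⟫ - ⟪v, mA ℓ⟫) ^ 2 ∂(volume.restrict (A ℓ)) := by
          refine integral_congr_ae ?_
          filter_upwards with ω
          rw [inner_sub_right]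
      _ ≤ D ^ 2 * ‖v‖ ^ 2 * (volume (A ℓ)).toReal := step1.trans step2
  -- tail bound for A 0
  have h0L : (0:ℕ) ≤ L := Nat.zero_le L
  have hm0 : MeasurableSet (A 0) := hmeas 0 h0L
  have hXint₀ : Integrable X (volume.restrict (A 0)) := hXint.restrict
  have hf₀ : Integrable (fun ω => ⟪v, X ω⟫) (volume.restrict (A 0)) := hXint₀.const_inner v
  have hsq₀ : Integrable (fun ω => ⟪v, X ω⟫ ^ 2) (volume.restrict (A 0)) := by
    refine ((hmom1.const_mul (‖v‖ ^ 2)).restrict.mono'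
      (((measurable_const.inner hX).pow_const 2).aestronglyMeasurable.restrict)) ?_
    filter_upwards with ω
    have h1 : |⟪v, X ω⟫| ≤ ‖v‖ * ‖X ω‖ := abs_real_inner_le_norm _ _
    have h2 : ‖X ω‖ ^ (2:ℝ) ≤ 1 + ‖X ω‖ ^ (2 + ε) := hb2 ω
    have h3 : ‖X ω‖ ^ (2:ℝ) = ‖X ω‖ ^ (2:ℕ) := by
      rw [← Real.rpow_natCast (‖X ω‖) 2]; norm_num
    rw [Real.norm_eq_abs, abs_of_nonneg (sq_nonneg _), ← sq_abs]
    rw [h3] at h2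
    nlinarith [abs_nonneg ⟪v, X ω⟫, norm_nonneg v, norm_nonneg (X ω), sq_nonneg (‖v‖ * ‖X ω‖)]
  have hM0pos : 0 < (volume (A 0)).toReal := ENNReal.toReal_pos (hApos 0 h0L).ne' (hfin 0)
  have hmean₀ : ⟪v, mA 0⟫ * ((volume.restrict (A 0)) Set.univ).toReal
      = ∫ ω, ⟪v, X ω⟫ ∂(volume.restrict (A 0)) := by
    rw [Measure.restrict_apply_univ, hmA 0 h0L, real_inner_smul_right, integral_inner hXint₀ v]
    field_simp
  have stepA : ∫ ω in A 0, ⟪v, X ω - mA 0⟫ ^ 2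
      ≤ ∫ ω, ⟪v, X ω⟫ ^ 2 ∂(volume.restrict (A 0)) := by
    have := ccb_sq_integral_mean_le (volume.restrict (A 0)) _ hf₀ hsq₀ (⟪v, mA 0⟫) 0 hmean₀
    calc ∫ ω in A 0, ⟪v, X ω - mA 0⟫ ^ 2
        = ∫ ω, (⟪v, X ω⟫ - ⟪v, mA 0⟫) ^ 2 ∂(volume.restrict (A 0)) := by
          refine integral_congr_ae ?_
          filter_upwards with ω
          rw [inner_sub_right]
      _ ≤ ∫ ω, (⟪v, X ω⟫ - 0) ^ 2 ∂(volume.restrict (A 0)) := this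
      _ = ∫ ω, ⟪v, X ω⟫ ^ 2 ∂(volume.restrict (A 0)) := by
          refine integral_congr_ae ?_
          filter_upwards with ω
          rw [sub_zero]
  have stepB : ∫ ω, ⟪v, X ω⟫ ^ 2 ∂(volume.restrict (A 0))
      ≤ ‖v‖ ^ 2 * ∫ ω, ‖X ω‖ ^ (2:ℝ) ∂(volume.restrict (A 0)) := by
    rw [← integral_const_mul]
    refine integral_mono_ae hsq₀ ((hX2int.const_mul _).restrict) ?_
    filter_upwards with ω
    have h1 : |⟪v, X ω⟫| ≤ ‖v‖ * ‖X ω‖ := abs_real_inner_le_norm _ _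
    have h3 : ‖X ω‖ ^ (2:ℝ) = ‖X ω‖ ^ (2:ℕ) := by
      rw [← Real.rpow_natCast (‖X ω‖) 2]; norm_num
    rw [h3, ← sq_abs]
    nlinarith [abs_nonneg ⟪v, X ω⟫, norm_nonneg v, norm_nonneg (X ω)]
  -- Hölder for the tail
  have hpq : Real.HolderConjugate ((2 + ε) / 2) ((2 + ε) / ε) := by
    refine ⟨?_, by positivity, by positivity⟩
    rw [inv_div, inv_div, inv_one, ← add_div, div_self h2ε.ne']
  have hXmem : MemLp X (ENNReal.ofReal (2 + ε)) (volume : Measure Ω) := by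
    have h1 : MemLp (fun ω => ‖X ω‖ ^ (2 + ε)) 1 (volume : Measure Ω) :=
      memLp_one_iff_integrable.mpr hmom
    have hne : ENNReal.ofReal (2 + ε) ≠ 0 := by
      simp [ENNReal.ofReal_eq_zero, not_le, h2ε]
    refine (memLp_norm_rpow_iff hXsm hne ENNReal.ofReal_ne_top).mp ?_
    have e1 : (ENNReal.ofReal (2 + ε)).toReal = 2 + ε := ENNReal.toReal_ofReal h2ε.le
    have e2 : ENNReal.ofReal (2 + ε) / ENNReal.ofReal (2 + ε) = 1 :=
      ENNReal.div_self hne ENNReal.ofReal_ne_top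
    rw [e1, e2]
    exact h1
  have hfmem : MemLp (fun ω => ‖X ω‖ ^ (2:ℝ)) (ENNReal.ofReal ((2 + ε) / 2))
      (volume.restrict (A 0)) := by
    have h1 := (hXmem.restrict (A 0)).norm_rpow_div 2
    have e1 : ((2:ℝ≥0∞)).toReal = (2:ℝ) := by norm_num
    have e2 : ENNReal.ofReal ((2 + ε) / 2) = ENNReal.ofReal (2 + ε) / 2 := by
      rw [ENNReal.ofReal_div_of_pos (by norm_num : (0:ℝ) < 2)]
      norm_num
    rw [e2]
    rw [e1] at h1
    exact h1
  have hgmem : MemLp (fun _ : Ω => (1:ℝ)) (ENNReal.ofReal ((2 + ε) / ε))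
      (volume.restrict (A 0)) := memLp_const 1
  have hH := MeasureTheory.integral_mul_le_Lp_mul_Lq_of_nonneg hpq
    (Filter.Eventually.of_forall fun ω => Real.rpow_nonneg (norm_nonneg _) _)
    (Filter.Eventually.of_forall fun _ => zero_le_one) hfmem hgmem
  have e2 : ∀ ω : Ω, (‖X ω‖ ^ (2:ℝ)) ^ ((2 + ε) / 2) = ‖X ω‖ ^ (2 + ε) := fun ω => by
    rw [← Real.rpow_mul (norm_nonneg _), show (2:ℝ) * ((2 + ε) / 2) = 2 + ε by ring]
  have stepC : ∫ ω, ‖X ω‖ ^ (2:ℝ) ∂(volume.restrict (A 0))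
      ≤ K * (volume (A 0)).toReal ^ (ε / (2 + ε)) := by
    calc ∫ ω, ‖X ω‖ ^ (2:ℝ) ∂(volume.restrict (A 0))
        = ∫ ω, ‖X ω‖ ^ (2:ℝ) * 1 ∂(volume.restrict (A 0)) := by simp
      _ ≤ (∫ ω, (‖X ω‖ ^ (2:ℝ)) ^ ((2 + ε) / 2) ∂(volume.restrict (A 0))) ^ (1 / ((2 + ε) / 2))
          * (∫ _ω, (1:ℝ) ^ ((2 + ε) / ε) ∂(volume.restrict (A 0))) ^ (1 / ((2 + ε) / ε)) := hH
      _ = (∫ ω, ‖X ω‖ ^ (2 + ε) ∂(volume.restrict (A 0))) ^ (2 / (2 + ε))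
          * ((volume (A 0)).toReal) ^ (ε / (2 + ε)) := by
          congr 1
          · rw [integral_congr_ae (Filter.Eventually.of_forall fun ω => e2 ω), one_div_div]
          · simp only [Real.one_rpow]
            rw [integral_const, measureReal_restrict_apply_univ, measureReal_def, smul_eq_mul, mul_one, one_div_div]
      _ ≤ K * ((volume (A 0)).toReal) ^ (ε / (2 + ε)) := by
          refine mul_le_mul_of_nonneg_right ?_ (Real.rpow_nonneg ENNReal.toReal_nonneg _)
          rw [hK]
          refine Real.rpow_le_rpow
            (setIntegral_nonneg hm0 fun ω _ => Real.rpow_nonneg (norm_nonneg _) _) ?_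
            (by positivity)
          exact setIntegral_le_integral hmom
            (Filter.Eventually.of_forall fun ω => Real.rpow_nonneg (norm_nonneg _) _)
  -- sum of block measures
  have hpd : Set.PairwiseDisjoint (↑(Finset.Icc 1 L) : Set ℕ) A := fun i hi j hj hij =>
    hdisj i (Finset.mem_Icc.mp (Finset.mem_coe.mp hi)).2
      j (Finset.mem_Icc.mp (Finset.mem_coe.mp hj)).2 hij
  have hU : volume (⋃ i ∈ Finset.Icc 1 L, A i) = ∑ i ∈ Finset.Icc 1 L, volume (A i) :=
    measure_biUnion_finset hpd (fun i hi => hmeas i (Finset.mem_Icc.mp hi).2)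
  have hle1 : ∑ ℓ ∈ Finset.Icc 1 L, volume (A ℓ) ≤ 1 := hU ▸ prob_le_one
  have hsum : ∑ ℓ ∈ Finset.Icc 1 L, (volume (A ℓ)).toReal ≤ 1 := by
    calc ∑ ℓ ∈ Finset.Icc 1 L, (volume (A ℓ)).toReal
        = (∑ ℓ ∈ Finset.Icc 1 L, volume (A ℓ)).toReal :=
          (ENNReal.toReal_sum fun a _ => hfin a).symm
      _ ≤ (1 : ℝ≥0∞).toReal := ENNReal.toReal_mono ENNReal.one_ne_top hle1
      _ = 1 := ENNReal.toReal_one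
  have hS : ∑ ℓ ∈ Finset.Icc 1 L, ∫ ω in A ℓ, ⟪v, X ω - mA ℓ⟫ ^ 2 ≤ D ^ 2 * ‖v‖ ^ 2 := by
    calc ∑ ℓ ∈ Finset.Icc 1 L, ∫ ω in A ℓ, ⟪v, X ω - mA ℓ⟫ ^ 2
        ≤ ∑ ℓ ∈ Finset.Icc 1 L, D ^ 2 * ‖v‖ ^ 2 * (volume (A ℓ)).toReal :=
          Finset.sum_le_sum hblock
      _ = D ^ 2 * ‖v‖ ^ 2 * ∑ ℓ ∈ Finset.Icc 1 L, (volume (A ℓ)).toReal := by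
          rw [← Finset.mul_sum]
      _ ≤ D ^ 2 * ‖v‖ ^ 2 * 1 := mul_le_mul_of_nonneg_left hsum (by positivity)
      _ = D ^ 2 * ‖v‖ ^ 2 := mul_one _
  have hT : ∫ ω in A 0, ⟪v, X ω - mA 0⟫ ^ 2
      ≤ K * (volume (A 0)).toReal ^ (ε / (2 + ε)) * ‖v‖ ^ 2 := by
    have h' := mul_le_mul_of_nonneg_left stepC (sq_nonneg ‖v‖)
    calc ∫ ω in A 0, ⟪v, X ω - mA 0⟫ ^ 2
        ≤ ‖v‖ ^ 2 * (K * (volume (A 0)).toReal ^ (ε / (2 + ε))) :=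
          stepA.trans (stepB.trans h')
      _ = K * (volume (A 0)).toReal ^ (ε / (2 + ε)) * ‖v‖ ^ 2 := by ring
  calc (∑ ℓ ∈ Finset.Icc 1 L, ∫ ω in A ℓ, ⟪v, X ω - mA ℓ⟫ ^ 2) +
        (∫ ω in A 0, ⟪v, X ω - mA 0⟫ ^ 2)
      ≤ D ^ 2 * ‖v‖ ^ 2 + K * (volume (A 0)).toReal ^ (ε / (2 + ε)) * ‖v‖ ^ 2 :=
        add_le_add hS hT
    _ = (D ^ 2 + K * ((volume (A 0)).toReal) ^ (ε / (2 + ε))) * ‖v‖ ^ 2 := by ring
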